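/- Let F'/F be a finite Galois extension of number fields. Assume that every nonzero ideal J of O_F such that J·O_{F'} is a principal ideal of O_{F'} is itself principal (injectivity of the natural map Cl_F → Cl_{F'} on class groups). Let a ∈ O_{F'} be a nonzero element such that the principal ideal a·O_{F'} is coprime to the relative different ideal 𝔡_{F'/F} and is Galois-stable: σ(a)·O_{F'} = a·O_{F'} for all σ ∈ Gal(F'/F). Then there exist a unit u ∈ O_{F'}^× and an element a₀ ∈ O_F with a = u·a₀. -/

import Mathlib

open NumberField

attribute [local instance] FractionRing.liftAlgebra FractionRing.isScalarTower_liftAlgebra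

section Aux

open Ideal UniqueFactorizationMonoid

variable (F F' : Type*) [Field F] [NumberField F] [Field F'] [NumberField F']
    [Algebra F F'] [FiniteDimensional F F'] [IsGalois F F']

set_option synthInstance.maxHeartbeats 1000000 in
lemma aux_sep' : Algebra.IsSeparable (FractionRing (𝓞 F)) (FractionRing (𝓞 F')) :=
  Algebra.IsAlgebraic.isSeparable_of_perfectField

local notation "ρ" => galRestrict (𝓞 F) F F' (𝓞 F')

lemma aux_map_rho_isMaximal (σ : F' ≃ₐ[F] F') (P : Ideal (𝓞 F')) (hP : P.IsMaximal) :
    (Ideal.map (ρ σ) P).IsMaximal := by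
  have h : Ideal.map (ρ σ) P = Ideal.comap ((ρ σ).symm) P := by
    ext x
    rw [Ideal.mem_map_of_equiv, Ideal.mem_comap]
    constructor
    · rintro ⟨y, hy, rfl⟩; simpa using hy
    · intro hx; exact ⟨(ρ σ).symm x, hx, (ρ σ).apply_symm_apply x⟩
  rw [h]
  exact Ideal.comap_isMaximal_of_surjective _ (ρ σ).symm.surjective

lemma aux_rho_inv_apply (σ : F' ≃ₐ[F] F') (x : 𝓞 F') : (ρ σ⁻¹) ((ρ σ) x) = x := by
  rw [map_inv]
  exact AlgEquiv.symm_apply_apply (ρ σ) x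

lemma aux_rho_apply_inv (σ : F' ≃ₐ[F] F') (x : 𝓞 F') : (ρ σ) ((ρ σ⁻¹) x) = x := by
  rw [map_inv]
  exact AlgEquiv.apply_symm_apply (ρ σ) x

/-- Transitivity of the Galois action on maximal ideals above a given prime. -/
lemma aux_exists_map_eq (P Q : Ideal (𝓞 F')) (hP : P.IsMaximal) (hQ : Q.IsMaximal)
    (h : Ideal.comap (algebraMap (𝓞 F) (𝓞 F')) P = Ideal.comap (algebraMap (𝓞 F) (𝓞 F')) Q) :
    ∃ σ : F' ≃ₐ[F] F', Ideal.map (ρ σ) P = Q := by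
  haveI := hP.isPrime
  by_contra hcon
  push_neg at hcon
  have hsub : ¬ ((Q : Set (𝓞 F')) ⊆
      ⋃ σ ∈ (Finset.univ : Finset (F' ≃ₐ[F] F')), ↑(Ideal.map (ρ σ) P)) := by
    intro hsub
    obtain ⟨σ, -, hle⟩ := (Ideal.subset_union_prime 1 1
      (fun σ _ _ _ => (aux_map_rho_isMaximal F F' σ P hP).isPrime)).mp hsub
    exact hcon σ (hQ.eq_of_le (aux_map_rho_isMaximal F F' σ P hP).ne_top hle).symm
  obtain ⟨x, hxQ, hx⟩ := Set.not_subset.mp hsub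
  simp only [Set.mem_iUnion, SetLike.mem_coe, not_exists, Finset.mem_univ, exists_true_left] at hx
  have hxQ' : x ∈ Q := hxQ
  have hprod : (∏ σ : F' ≃ₐ[F] F', (ρ σ) x) ∈ Q := by
    have hd : (ρ 1) x ∣ ∏ σ : F' ≃ₐ[F] F', (ρ σ) x :=
      Finset.dvd_prod_of_mem _ (Finset.mem_univ 1)
    rw [map_one] at hd
    obtain ⟨c, hc⟩ := hd
    rw [AlgEquiv.one_apply] at hc
    rw [hc]
    exact Ideal.mul_mem_right _ _ hxQ'
  have hprodP : (∏ σ : F' ≃ₐ[F] F', (ρ σ) x) ∈ P := by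
    rw [prod_galRestrict_eq_norm] at hprod ⊢
    have : _ ∈ Ideal.comap (algebraMap (𝓞 F) (𝓞 F')) Q := hprod
    rw [← h] at this
    exact this
  obtain ⟨σ, -, hσ⟩ := (Ideal.IsPrime.prod_mem_iff (hp := hP.isPrime)).mp hprodP
  apply hx σ⁻¹
  have := Ideal.mem_map_of_mem (ρ σ⁻¹) hσ
  rwa [aux_rho_inv_apply] at this

lemma aux_map_rho_extended (σ : F' ≃ₐ[F] F') (p : Ideal (𝓞 F)) :
    Ideal.map (ρ σ) (Ideal.map (algebraMap (𝓞 F) (𝓞 F')) p)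
      = Ideal.map (algebraMap (𝓞 F) (𝓞 F')) p := by
  have key : ∀ τ : F' ≃ₐ[F] F',
      Ideal.map (ρ τ) (Ideal.map (algebraMap (𝓞 F) (𝓞 F')) p)
        ≤ Ideal.map (algebraMap (𝓞 F) (𝓞 F')) p := by
    intro τ
    rw [Ideal.map_le_iff_le_comap, Ideal.map_le_iff_le_comap]
    intro x hx
    rw [Ideal.mem_comap, Ideal.mem_comap, AlgEquiv.commutes]
    exact Ideal.mem_map_of_mem _ hx
  refine le_antisymm (key σ) ?_
  intro x hx
  rw [Ideal.mem_map_of_equiv]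
  exact ⟨(ρ σ⁻¹) x, key σ⁻¹ (Ideal.mem_map_of_mem _ hx), aux_rho_apply_inv F F' σ x⟩

/-- Descent: a Galois-stable ideal coprime to the different is extended from below. -/
lemma aux_descent (I : Ideal (𝓞 F')) :
    I ≠ ⊥ → I + differentIdeal (𝓞 F) (𝓞 F') = ⊤ →
    (∀ σ : F' ≃ₐ[F] F', Ideal.map (ρ σ) I = I) →
    ∃ J : Ideal (𝓞 F), Ideal.map (algebraMap (𝓞 F) (𝓞 F')) J = I := by
  haveI := aux_sep' F F'
  induction I using IsNoetherian.induction with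
  | _ I ih =>
  intro hbot hcop hstab
  by_cases htop : I = ⊤
  · exact ⟨⊤, by simp [htop, Ideal.map_top]⟩
  obtain ⟨P, hPmax, hIP⟩ := Ideal.exists_le_maximal I htop
  haveI := hPmax
  have hPbot : P ≠ ⊥ := fun h => hbot (le_bot_iff.mp (h ▸ hIP))
  set p := Ideal.comap (algebraMap (𝓞 F) (𝓞 F')) P with hpdef
  haveI hpmax : p.IsMaximal := Ideal.isMaximal_comap_of_isIntegral_of_isMaximal P
  have hpbot : p ≠ ⊥ := by
    obtain ⟨x, hxP, hx0⟩ := Submodule.exists_mem_ne_zero_of_ne_bot hPbot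
    exact Ideal.comap_ne_bot_of_integral_mem hx0 hxP (Algebra.IsIntegral.isIntegral x)
  set M := Ideal.map (algebraMap (𝓞 F) (𝓞 F')) p with hMdef
  have hMbot : M ≠ ⊥ := by
    rw [hMdef, Ne, Ideal.map_eq_bot_iff_of_injective
      (FaithfulSMul.algebraMap_injective (𝓞 F) (𝓞 F'))]
    exact hpbot
  have hMP : M ≤ P := Ideal.map_le_iff_le_comap.mpr le_rfl
  have hMtop : M ≠ ⊤ := fun h => hPmax.ne_top (top_le_iff.mp (h ▸ hMP))
  -- every normalized factor of M contains I
  have hQI : ∀ Q ∈ UniqueFactorizationMonoid.normalizedFactors M, I ≤ Q := by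
    intro Q hQf
    have hQprime : Prime Q := UniqueFactorizationMonoid.prime_of_normalized_factor Q hQf
    have hQbot : Q ≠ ⊥ := hQprime.ne_zero
    haveI hQpr : Q.IsPrime := Ideal.isPrime_of_prime hQprime
    haveI hQmax : Q.IsMaximal := hQpr.isMaximal hQbot
    have hMQ : M ≤ Q :=
      Ideal.le_of_dvd (UniqueFactorizationMonoid.dvd_of_mem_normalizedFactors hQf)
    have hcomap : Ideal.comap (algebraMap (𝓞 F) (𝓞 F')) P
        = Ideal.comap (algebraMap (𝓞 F) (𝓞 F')) Q :=
      hpmax.eq_of_le (Ideal.comap_ne_top _ hQpr.ne_top) (Ideal.map_le_iff_le_comap.mp hMQ)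
    obtain ⟨σ, hσ⟩ := aux_exists_map_eq F F' P Q hPmax hQmax hcomap
    have hmono : Ideal.map (ρ σ) I ≤ Ideal.map (ρ σ) P := Ideal.map_mono hIP
    rwa [hstab σ, hσ] at hmono
  -- no square factors
  have hsqf : ∀ Q ∈ UniqueFactorizationMonoid.normalizedFactors M, ¬ (Q ^ 2 ∣ M) := by
    intro Q hQf hdvd
    have hQprime : Prime Q := UniqueFactorizationMonoid.prime_of_normalized_factor Q hQf
    have hdd : Q ^ (2 - 1) ∣ differentIdeal (𝓞 F) (𝓞 F') :=
      pow_sub_one_dvd_differentIdeal (A := 𝓞 F) (B := 𝓞 F') Q 2 hpbot hdvd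
    rw [pow_one] at hdd
    have htopQ : (⊤ : Ideal (𝓞 F')) ≤ Q := by
      rw [← hcop]
      exact sup_le (hQI Q hQf) (Ideal.le_of_dvd hdd)
    exact (Ideal.isPrime_of_prime hQprime).ne_top (top_le_iff.mp htopQ)
  -- nodup factors
  classical
  have hnodup : (UniqueFactorizationMonoid.normalizedFactors M).Nodup := by
    rw [Multiset.nodup_iff_count_le_one]
    intro Q
    by_contra hc
    push_neg at hc
    have hQf : Q ∈ UniqueFactorizationMonoid.normalizedFactors M :=
      Multiset.count_pos.mp (by omega)
    have hQprime : Prime Q := UniqueFactorizationMonoid.prime_of_normalized_factor Q hQf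
    apply hsqf Q hQf
    rw [UniqueFactorizationMonoid.dvd_iff_normalizedFactors_le_normalizedFactors
      (pow_ne_zero 2 hQprime.ne_zero) hMbot,
      UniqueFactorizationMonoid.normalizedFactors_pow,
      UniqueFactorizationMonoid.normalizedFactors_irreducible hQprime.irreducible,
      normalize_eq, Multiset.nsmul_singleton]
    exact Multiset.le_count_iff_replicate_le.mp (by omega)
  -- M divides I
  have hMprod : (UniqueFactorizationMonoid.normalizedFactors M).prod = M :=
    associated_iff_eq.mp (UniqueFactorizationMonoid.prod_normalizedFactors hMbot)
  have hMdvd : M ∣ I := by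
    rw [← hMprod]
    refine Multiset.prod_primes_dvd I
      (fun Q hQ => UniqueFactorizationMonoid.prime_of_normalized_factor Q hQ)
      (fun Q hQ => Ideal.dvd_iff_le.mpr (hQI Q hQ)) ?_
    intro Q
    simp only [associated_eq_eq, Multiset.countP_eq_card_filter,
      ← Multiset.count_eq_card_filter_eq]
    exact Multiset.nodup_iff_count_le_one.mp hnodup Q
  obtain ⟨I', hI'⟩ := hMdvd
  have hI'bot : I' ≠ ⊥ := fun h => hbot (by rw [hI', h, Ideal.mul_bot])
  have hII' : I ≤ I' := hI' ▸ Ideal.mul_le_right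
  have hlt : I < I' := by
    refine lt_of_le_of_ne hII' fun h => hMtop ?_
    have h1 : M * I' = 1 * I' := by rw [one_mul, ← hI', h]
    rw [mul_right_cancel₀ hI'bot h1]
    exact Ideal.one_eq_top
  have hcop' : I' + differentIdeal (𝓞 F) (𝓞 F') = ⊤ :=
    top_le_iff.mp (hcop ▸ sup_le_sup_right hII' _)
  have hstab' : ∀ σ : F' ≃ₐ[F] F', Ideal.map (ρ σ) I' = I' := by
    intro σ
    have h1 : Ideal.map (ρ σ) I = Ideal.map (ρ σ) M * Ideal.map (ρ σ) I' := by
      rw [hI', Ideal.map_mul]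
    rw [hstab σ, aux_map_rho_extended F F' σ p, ← hMdef] at h1
    exact mul_left_cancel₀ hMbot (h1.symm.trans hI')
  obtain ⟨J', hJ'⟩ := ih I' hlt hI'bot hcop' hstab'
  exact ⟨p * J', by rw [Ideal.map_mul, hJ', ← hMdef, ← hI']⟩

end Aux

/-- Let `F'/F` be a finite Galois extension of number fields such that every nonzero ideal of
`O_F` which becomes principal in `O_{F'}` is already principal (injectivity of
`Cl_F → Cl_{F'}`).  If `a ∈ O_{F'}` is nonzero, the ideal `(a)` is coprime to the relative
different and Galois-stable, then `a = u·a₀` for a unit `u` of `O_{F'}` and some `a₀ ∈ O_F`. -/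
theorem galois_stable_element_eq_unit_mul_of_classGroup_injective
    (F F' : Type*) [Field F] [NumberField F] [Field F'] [NumberField F']
    [Algebra F F'] [FiniteDimensional F F'] [IsGalois F F']
    (hcl : ∀ J : Ideal (𝓞 F), J ≠ ⊥ →
      (Ideal.map (algebraMap (𝓞 F) (𝓞 F')) J).IsPrincipal → J.IsPrincipal)
    (a : 𝓞 F') (ha : a ≠ 0)
    (hcop : Ideal.span {a} + differentIdeal (𝓞 F) (𝓞 F') = ⊤)
    (hgal : ∀ σ : F' ≃ₐ[F] F',
      Ideal.span {galRestrict (𝓞 F) F F' (𝓞 F') σ a} = Ideal.span {a}) :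
    ∃ (u : (𝓞 F')ˣ) (a₀ : 𝓞 F), a = u * algebraMap (𝓞 F) (𝓞 F') a₀ := by
  have hspan : Ideal.span {a} ≠ ⊥ := by
    simpa [Ideal.span_singleton_eq_bot] using ha
  have hstab : ∀ σ : F' ≃ₐ[F] F',
      Ideal.map (galRestrict (𝓞 F) F F' (𝓞 F') σ) (Ideal.span {a}) = Ideal.span {a} := by
    intro σ
    rw [Ideal.map_span, Set.image_singleton]
    exact hgal σ
  obtain ⟨J, hJ⟩ := aux_descent F F' (Ideal.span {a}) hspan hcop hstab
  have hJbot : J ≠ ⊥ := fun h => hspan (by rw [← hJ, h, Ideal.map_bot])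
  have hJprin : J.IsPrincipal := hcl J hJbot ⟨⟨a, by rw [hJ, Ideal.submodule_span_eq]⟩⟩
  obtain ⟨a₀, ha₀⟩ := hJprin
  rw [ha₀, Ideal.submodule_span_eq, Ideal.map_span, Set.image_singleton, Ideal.span_singleton_eq_span_singleton] at hJ
  obtain ⟨u, hu⟩ := hJ
  exact ⟨u, a₀, by rw [← hu]; ring⟩
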